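/- Let Λ be a row-finite k-graph, {S_λ, S_{μ*}} a Cohn Λ-family in an R-algebra A, λ ∈ vΛ, and E ⊆ s(λ)Λ a finite set with ∏_{ν∈E}(S_{s(λ)} - S_ν S_{ν*}) = 0. Then S_v - S_λ S_{λ*} = ∏_{ν∈E}(S_v - S_{λν} S_{(λν)*}). -/

import Mathlib

/-- A higher-rank graph (`k`-graph): a small category with a degree functor to `ℕ^k`
satisfying the factorisation property.  Paths and vertices live in one type `Path`;
vertices are the paths of degree `0`. Composition is a total function which is only
meaningful on composable pairs. -/
structure KGraph (k : ℕ) where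
  Path : Type
  src : Path → Path
  rng : Path → Path
  comp : Path → Path → Path
  deg : Path → Fin k → ℕ
  deg_src : ∀ a, deg (src a) = 0
  deg_rng : ∀ a, deg (rng a) = 0
  src_vertex : ∀ a, deg a = 0 → src a = a
  rng_vertex : ∀ a, deg a = 0 → rng a = a
  comp_assoc : ∀ a b c, src a = rng b → src b = rng c →
    comp (comp a b) c = comp a (comp b c)
  rng_comp : ∀ a b, src a = rng b → rng (comp a b) = rng a
  src_comp : ∀ a b, src a = rng b → src (comp a b) = src b
  deg_comp : ∀ a b, src a = rng b → deg (comp a b) = deg a + deg b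
  comp_rng_self : ∀ a, comp (rng a) a = a
  comp_src_self : ∀ a, comp a (src a) = a
  factor : ∀ a (m n : Fin k → ℕ), deg a = m + n →
    ∃! p : Path × Path, src p.1 = rng p.2 ∧ comp p.1 p.2 = a ∧
      deg p.1 = m ∧ deg p.2 = n

namespace KGraph

variable {k : ℕ}

/-- `v` is a vertex iff it has degree `0`. -/
def IsVertex (Λ : KGraph k) (v : Λ.Path) : Prop := Λ.deg v = 0

/-- The set `vΛ¹` of edges (paths of degree `e_i` for some `i`) with range `v`. -/
def edgesAt (Λ : KGraph k) (v : Λ.Path) : Set Λ.Path :=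
  {e | Λ.rng e = v ∧ ∃ i : Fin k, Λ.deg e = Pi.single i 1}

/-- `Λ` is row-finite: each vertex receives finitely many edges. -/
def RowFinite (Λ : KGraph k) : Prop := ∀ v, (Λ.edgesAt v).Finite

/-- `Λ` has no sources: `vΛ^m ≠ ∅` for every vertex `v` and every `m ∈ ℕ^k`. -/
def NoSources (Λ : KGraph k) : Prop :=
  ∀ v, Λ.IsVertex v → ∀ m : Fin k → ℕ, ∃ a, Λ.rng a = v ∧ Λ.deg a = m

/-- `MCE(l, m)`: minimal common extensions of `l` and `m`. -/
def MCE (Λ : KGraph k) (l m : Λ.Path) : Set Λ.Path :=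
  {t | Λ.deg t = Λ.deg l ⊔ Λ.deg m ∧
    (∃ ν, Λ.src l = Λ.rng ν ∧ Λ.comp l ν = t) ∧
    (∃ γ, Λ.src m = Λ.rng γ ∧ Λ.comp m γ = t)}

/-- `Λ^min(l, m)`: pairs `(ν, γ)` with `lν = mγ ∈ MCE(l, m)`. -/
def MinPairs (Λ : KGraph k) (l m : Λ.Path) : Set (Λ.Path × Λ.Path) :=
  {p | Λ.src l = Λ.rng p.1 ∧ Λ.src m = Λ.rng p.2 ∧
    Λ.comp l p.1 = Λ.comp m p.2 ∧ Λ.comp l p.1 ∈ Λ.MCE l m}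

/-- `E ⊆ vΛ` is exhaustive if every path with range `v` has a common extension with
some member of `E`. -/
def IsExhaustive (Λ : KGraph k) (v : Λ.Path) (E : Set Λ.Path) : Prop :=
  ∀ a, Λ.rng a = v → ∃ μ ∈ E, (Λ.MinPairs a μ).Nonempty

end KGraph

/-- A Cohn `Λ`-family in a ring `A` : relations (CP1)–(CP3). -/
structure IsCohnFamily {k : ℕ} (Λ : KGraph k) (A : Type) [Ring A]
    (T Ts : Λ.Path → A) : Prop where
  ghost_vertex : ∀ v, Λ.IsVertex v → Ts v = T v
  vertex_idem : ∀ v, Λ.IsVertex v → T v * T v = T v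
  vertex_orth : ∀ v w, Λ.IsVertex v → Λ.IsVertex w → v ≠ w → T v * T w = 0
  mul_comp : ∀ a b, Λ.src a = Λ.rng b → T a * T b = T (Λ.comp a b)
  ghost_mul_comp : ∀ a b, Λ.src a = Λ.rng b → Ts b * Ts a = Ts (Λ.comp a b)
  cp3 : ∀ a b, Ts a * T b = ∑ᶠ p ∈ Λ.MinPairs a b, T p.1 * Ts p.2

/-- Product of the images of the elements of a finset, in some fixed enumeration.
(The products we take are over pairwise-commuting factors, so the order is immaterial.) -/
noncomputable def listProd {A : Type} [Monoid A] {ι : Type} (s : Finset ι) (f : ι → A) : A :=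
  (s.toList.map f).prod

/-- `F_{T,v} := T_v - ∏_{e ∈ vΛ¹} (T_v - T_e T_{e*})`. -/
noncomputable def FF {k : ℕ} (Λ : KGraph k) (hrf : Λ.RowFinite) {A : Type} [Ring A]
    (T Ts : Λ.Path → A) (v : Λ.Path) : A :=
  T v - listProd (hrf v).toFinset (fun e => T v - T e * Ts e)

/-- `Λ^min(l,l)` is the singleton `{(s(l), s(l))}`. -/
lemma minpairs_self {k : ℕ} (Λ : KGraph k) (l : Λ.Path) :
    Λ.MinPairs l l = {(Λ.src l, Λ.src l)} := by
  ext p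
  constructor
  · rintro ⟨h1, h2, h3, h4⟩
    obtain ⟨hdeg, -, -⟩ := h4
    have hd1 : Λ.deg p.1 = 0 := by
      have := Λ.deg_comp l p.1 h1
      rw [hdeg, sup_idem] at this
      have : Λ.deg l + Λ.deg p.1 = Λ.deg l + 0 := by rw [add_zero]; exact this.symm
      exact add_left_cancel this
    have hd2 : Λ.deg p.2 = 0 := by
      have := Λ.deg_comp l p.2 h2
      rw [← h3, hdeg, sup_idem] at this
      have : Λ.deg l + Λ.deg p.2 = Λ.deg l + 0 := by rw [add_zero]; exact this.symm
      exact add_left_cancel this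
    have e1 : p.1 = Λ.src l := by rw [h1, Λ.rng_vertex p.1 hd1]
    have e2 : p.2 = Λ.src l := by rw [h2, Λ.rng_vertex p.2 hd2]
    simp only [Set.mem_singleton_iff]
    exact Prod.ext e1 e2
  · rintro rfl
    have hr : Λ.rng (Λ.src l) = Λ.src l := Λ.rng_vertex _ (Λ.deg_src l)
    have hc : Λ.comp l (Λ.src l) = l := Λ.comp_src_self l
    refine ⟨hr.symm, hr.symm, rfl, ?_⟩
    refine ⟨?_, ⟨Λ.src l, hr.symm, rfl⟩, ⟨Λ.src l, hr.symm, rfl⟩⟩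
    show Λ.deg (Λ.comp l (Λ.src l)) = _
    rw [hc, sup_idem]

/-- `S_{l*} S_l = S_{s(l)}`. -/
lemma ghost_mul_self {k : ℕ} {Λ : KGraph k} {A : Type} [Ring A]
    {S Ss : Λ.Path → A} (hS : IsCohnFamily Λ A S Ss) (l : Λ.Path) :
    Ss l * S l = S (Λ.src l) := by
  have hvtx : Λ.IsVertex (Λ.src l) := Λ.deg_src l
  rw [hS.cp3 l l, minpairs_self Λ l, finsum_mem_singleton,
    hS.ghost_vertex _ hvtx, hS.vertex_idem _ hvtx]

/-- Purely ring-theoretic step of the telescoping computation. -/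
lemma step_ring {A : Type} [Ring A] (V L Ls w q P : A)
    (hVV : V * V = V) (hVL : V * L = L) (hLsV : Ls * V = Ls)
    (hLsL : Ls * L = w) (hLw : L * w = L) (hqw : q * w = q) :
    (V - L * (q * Ls)) * (V - L * Ls + L * (P * Ls)) =
      V - L * Ls + L * ((w - q) * P * Ls) := by
  have eVL : ∀ x, V * (L * x) = L * x := fun x => by rw [← mul_assoc, hVL]
  have eLsL : ∀ x, Ls * (L * x) = w * x := fun x => by rw [← mul_assoc, hLsL]
  have eqw : ∀ x, q * (w * x) = q * x := fun x => by rw [← mul_assoc, hqw]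
  have eLw : ∀ x, L * (w * x) = L * x := fun x => by rw [← mul_assoc, hLw]
  simp only [mul_sub, sub_mul, mul_add, add_mul, mul_assoc, hVV, eVL, hLsV, eLsL, eqw, eLw, hLsL, hqw]
  abel

/-- Base case of the telescoping computation. -/
lemma base_ring {A : Type} [Ring A] (V L Ls w q : A) (hLw : L * w = L) :
    V - L * (q * Ls) = V - L * Ls + L * ((w - q) * Ls) := by
  have eLw : ∀ x, L * (w * x) = L * x := fun x => by rw [← mul_assoc, hLw]
  simp only [sub_mul, mul_sub, mul_assoc, eLw]
  abel

/-- Telescoping identity along a list of paths with range `s(l)`. -/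
lemma key_list {k : ℕ} {Λ : KGraph k} {A : Type} [Ring A]
    {S Ss : Λ.Path → A} (hS : IsCohnFamily Λ A S Ss)
    (v : Λ.Path) (hv : Λ.IsVertex v) (l : Λ.Path) (hl : Λ.rng l = v) :
    ∀ L : List Λ.Path, L ≠ [] → (∀ ν ∈ L, Λ.rng ν = Λ.src l) →
      (L.map (fun ν => S v - S (Λ.comp l ν) * Ss (Λ.comp l ν))).prod =
        S v - S l * Ss l +
          S l * ((L.map (fun ν => S (Λ.src l) - S ν * Ss ν)).prod * Ss l) := by
  have hvsl : Λ.IsVertex (Λ.src l) := Λ.deg_src l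
  have hsv : Λ.src v = Λ.rng l := by rw [Λ.src_vertex v hv, hl]
  have hcvl : Λ.comp v l = l := by rw [← hl]; exact Λ.comp_rng_self l
  have hVV : S v * S v = S v := hS.vertex_idem v hv
  have hVL : S v * S l = S l := by rw [hS.mul_comp v l hsv, hcvl]
  have hLsV : Ss l * S v = Ss l := by
    have := hS.ghost_mul_comp v l hsv
    rw [hcvl, hS.ghost_vertex v hv] at this
    exact this
  have hLsL : Ss l * S l = S (Λ.src l) := ghost_mul_self hS l
  have hsrcsrc : Λ.src (Λ.src l) = Λ.src l := Λ.src_vertex _ (Λ.deg_src l)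
  have hrngsrc : Λ.rng (Λ.src l) = Λ.src l := Λ.rng_vertex _ (Λ.deg_src l)
  have hLw : S l * S (Λ.src l) = S l := by
    rw [hS.mul_comp l (Λ.src l) hrngsrc.symm, Λ.comp_src_self]
  intro L
  induction L with
  | nil => intro h; exact absurd rfl h
  | cons ν L ih =>
    intro _ hmem
    have hν : Λ.rng ν = Λ.src l := hmem ν List.mem_cons_self
    have hcν : Λ.comp (Λ.src l) ν = ν := by rw [← hν]; exact Λ.comp_rng_self ν
    have hsνν : Λ.src (Λ.src l) = Λ.rng ν := by rw [hsrcsrc, hν]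
    have hq : S (Λ.comp l ν) * Ss (Λ.comp l ν) = S l * ((S ν * Ss ν) * Ss l) := by
      rw [← hS.mul_comp l ν hν.symm, ← hS.ghost_mul_comp l ν hν.symm]
      simp [List.prod_cons, mul_assoc]
    have hqw : (S ν * Ss ν) * S (Λ.src l) = S ν * Ss ν := by
      have h2 := hS.ghost_mul_comp (Λ.src l) ν hsνν
      rw [hcν, hS.ghost_vertex _ hvsl] at h2
      rw [mul_assoc, h2]
    cases L with
    | nil =>
      simp only [List.map_cons, List.map_nil, List.prod_cons, List.prod_nil, mul_one]
      rw [hq]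
      exact base_ring (S v) (S l) (Ss l) (S (Λ.src l)) (S ν * Ss ν) hLw
    | cons mu L' =>
      rw [List.map_cons, List.prod_cons,
        ih (by simp) (fun x hx => hmem x (List.mem_cons_of_mem _ hx)), hq,
        step_ring (S v) (S l) (Ss l) (S (Λ.src l)) (S ν * Ss ν) _ hVV hVL hLsV hLsL hLw hqw,
        List.map_cons, List.prod_cons]
      simp [List.prod_cons, mul_assoc]

/-- Lemma: for a Cohn `Λ`-family `{S_λ, S_{μ*}}`, if `λ ∈ vΛ` and `E ⊆ s(λ)Λ` is a
finite set with `∏_{ν∈E} (S_{s(λ)} - S_ν S_{ν*}) = 0`, then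
`S_v - S_λ S_{λ*} = ∏_{ν∈E} (S_v - S_{λν} S_{(λν)*})`. -/
theorem cohn_family_telescoping {k : ℕ} (Λ : KGraph k) (hrf : Λ.RowFinite)
    (R : Type) [CommRing R] (A : Type) [Ring A] [Algebra R A]
    (S Ss : Λ.Path → A) (hS : IsCohnFamily Λ A S Ss)
    (v : Λ.Path) (hv : Λ.IsVertex v) (l : Λ.Path) (hl : Λ.rng l = v)
    (E : Finset Λ.Path) (hE : ∀ ν ∈ E, Λ.rng ν = Λ.src l)
    (hprod : listProd E (fun ν => S (Λ.src l) - S ν * Ss ν) = 0) :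
    S v - S l * Ss l =
      listProd E (fun ν => S v - S (Λ.comp l ν) * Ss (Λ.comp l ν)) := by
  by_cases hEe : E = ∅
  · subst hEe
    simp only [listProd, Finset.toList_empty, List.map_nil, List.prod_nil] at hprod
    haveI : Subsingleton A := subsingleton_of_zero_eq_one hprod.symm
    exact Subsingleton.elim _ _
  · have hne : E.toList ≠ [] := by
      simpa [Finset.toList_eq_nil] using hEe
    unfold listProd at hprod ⊢
    rw [key_list hS v hv l hl E.toList hne
        (fun ν h => hE ν (Finset.mem_toList.mp h)), hprod]
    simp
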